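/- Let a, b, c, d be four distinct points on the unit circle ∂𝔹², lying on ∂𝔹² in this circular order, such that the lines L[a,b] and L[c,d] are not parallel. Let p be a point on the open Euclidean segment (b,c), let g = LIS[a,b,c,d], j = LIS[g,p,a,c], k = LIS[g,p,b,d], and l = LIS[g,p,a,d], where each of these pairs of lines intersects in a single point, and assume p, j, k, l ∈ 𝔹². Then ρ(p,j) = ρ(k,l) and ρ(p,k) = ρ(j,l), where ρ is the hyperbolic metric of the unit disk. -/

import Mathlib

open Complex ComplexConjugate

set_option maxHeartbeats 8000000

/-- The line through two points `a`, `b` in the complex plane. -/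
noncomputable def lineThrough (a b : ℂ) : Set ℂ :=
  {z : ℂ | ∃ t : ℝ, z = a + (t : ℂ) * (b - a)}

/-- The Hilbert metric of the unit disk: for `a ≠ b`,
`h(a,b) = log (|u-b||a-v| / (|u-a||b-v|))` where `u, v` are the intersection
points of the line through `a, b` with the unit circle, ordered so that
`|u-a| < |u-b|` (equivalently `|v-b| < |v-a|`). For `a = b` the defining set
is empty and `sSup ∅ = 0`. -/
noncomputable def hilbertDist (a b : ℂ) : ℝ :=
  sSup { d : ℝ | ∃ u v : ℂ, ‖u‖ = 1 ∧ ‖v‖ = 1 ∧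
    u ∈ lineThrough a b ∧ v ∈ lineThrough a b ∧
    dist u a < dist u b ∧ dist v b < dist v a ∧
    d = Real.log ((dist u b * dist a v) / (dist u a * dist b v)) }

/-- The hyperbolic (Poincaré) metric of the unit disk, defined by
`sinh (ρ(a,b)/2) = |a-b| / √((1-|a|²)(1-|b|²))`. -/
noncomputable def rhoDist (a b : ℂ) : ℝ :=
  2 * Real.arsinh (‖a - b‖ /
    Real.sqrt ((1 - ‖a‖ ^ 2) * (1 - ‖b‖ ^ 2)))

/-- The visual angle metric of the unit disk:
`v(a,b) = sup {∠(a,z,b) : z ∈ ∂𝔹²}`. -/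
noncomputable def visualAngle (a b : ℂ) : ℝ :=
  sSup { α : ℝ | ∃ z : ℂ, ‖z‖ = 1 ∧ α = EuclideanGeometry.angle a z b }

/-- Euclidean distance from the origin to the line through `a` and `b`. -/
noncomputable def distToLine (a b : ℂ) : ℝ := Metric.infDist 0 (lineThrough a b)

/-- The Hilbert disk `B_h(z₀, t)`. -/
noncomputable def hilbertBall (z₀ : ℂ) (t : ℝ) : Set ℂ :=
  {z : ℂ | ‖z‖ < 1 ∧ hilbertDist z₀ z < t}

/-- The hyperbolic disk `B_ρ(z₀, t)`. -/
noncomputable def rhoBall (z₀ : ℂ) (t : ℝ) : Set ℂ :=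
  {z : ℂ | ‖z‖ < 1 ∧ rhoDist z₀ z < t}

/-- For four points `a, b, c, d` on the unit circle in circular order with
`L[a,b]`, `L[c,d]` not parallel, `p` on the open segment `(b,c)`,
`g = LIS[a,b,c,d]`, `j = LIS[g,p,a,c]`, `k = LIS[g,p,b,d]`, `l = LIS[g,p,a,d]`
(the intersections being single points), and `p, j, k, l` in the unit disk,
one has `ρ(p,j) = ρ(k,l)` and `ρ(p,k) = ρ(j,l)`. -/
lemma chord_mem {a c z : ℂ} (ha : a * conj a = 1) (hc : c * conj c = 1)
    (hz : z ∈ lineThrough a c) : z + a * c * conj z = a + c := by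
  obtain ⟨t, rfl⟩ := hz
  simp only [map_add, map_mul, map_sub, Complex.conj_ofReal]
  linear_combination ((1 - (t:ℂ)) * c) * ha + ((t:ℂ) * a) * hc

lemma mem_of_chord {a c z : ℂ} (hac : a ≠ c) (ha : a * conj a = 1) (hc : c * conj c = 1)
    (hz : z + a * c * conj z = a + c) : z ∈ lineThrough a c := by
  have hδ : (c - a) ≠ 0 := sub_ne_zero.mpr (Ne.symm hac)
  have hζ' : (z - a) + a*c*(conj z - conj a) = 0 := by linear_combination hz - c * ha
  have hδ' : (c - a) + a*c*(conj c - conj a) = 0 := by linear_combination a * hc - c * ha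
  have key : (z - a) * (conj c - conj a) = (conj z - conj a) * (c - a) := by
    linear_combination (conj c - conj a) * hζ' - (conj z - conj a) * hδ'
  set W : ℂ := (z - a) * (conj c - conj a) with hW
  have hconjW : conj W = W := by
    rw [hW, map_mul, map_sub, map_sub, Complex.conj_conj, Complex.conj_conj]
    linear_combination -key
  have hcast : (W.re : ℂ) = W := Complex.conj_eq_iff_re.mp hconjW
  refine ⟨W.re / Complex.normSq (c - a), ?_⟩
  have hn : Complex.normSq (c - a) ≠ 0 := ne_of_gt (Complex.normSq_pos.mpr hδ)
  have hδc : conj (c - a) ≠ 0 := by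
    simpa using (map_ne_zero (starRingEnd ℂ)).mpr hδ
  have hδc' : (starRingEnd ℂ) c - (starRingEnd ℂ) a ≠ 0 := by
    rwa [map_sub] at hδc
  have hmc : ((Complex.normSq (c-a) : ℝ) : ℂ) = (c - a) * ((starRingEnd ℂ) c - (starRingEnd ℂ) a) := by
    rw [← Complex.mul_conj, map_sub]
  have hgoal : z - a = ((z - a) * ((starRingEnd ℂ) c - (starRingEnd ℂ) a)) * (c - a) / ((c - a) * ((starRingEnd ℂ) c - (starRingEnd ℂ) a)) := by
    rw [eq_div_iff (mul_ne_zero hδ hδc')]; ring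
  push_cast [hcast]
  rw [hmc, hW, div_mul_eq_mul_div]
  linear_combination hgoal

lemma line_subset {a c x y : ℂ} (hx : x ∈ lineThrough a c) (hy : y ∈ lineThrough a c) :
    lineThrough x y ⊆ lineThrough a c := by
  obtain ⟨s, rfl⟩ := hx
  obtain ⟨r, rfl⟩ := hy
  rintro z ⟨t, rfl⟩
  exact ⟨s + t*(r - s), by push_cast; ring⟩

lemma exp_I_ne {s t : ℝ} (h1 : 0 < t - s) (h2 : t - s < 2*Real.pi) :
    Complex.exp (s*Complex.I) ≠ Complex.exp (t*Complex.I) := by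
  intro h
  rw [Complex.exp_eq_exp_iff_exists_int] at h
  obtain ⟨n, hn⟩ := h
  have h' : ((s - t - n*(2*Real.pi) : ℝ) : ℂ) * Complex.I = 0 := by
    push_cast
    linear_combination hn
  rcases mul_eq_zero.mp h' with h''|h''
  · have heq : (s - t - n*(2*Real.pi) : ℝ) = 0 := by exact_mod_cast h''
    have hπ := Real.pi_pos
    have hn0 : (n:ℝ) < 0 := by nlinarith
    have hn1 : n ≤ -1 := by
      have : n < 0 := by exact_mod_cast hn0
      omega
    have hn2 : (n:ℝ) ≤ -1 := by exact_mod_cast hn1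
    nlinarith
  · exact Complex.I_ne_zero h''

lemma eq_of_sq_eq {x y : ℝ} (hx : 0 ≤ x) (hy : 0 ≤ y) (h : x^2 = y^2) : x = y := by
  have h0 : (x - y)*(x + y) = 0 := by linear_combination h
  rcases mul_eq_zero.mp h0 with h'|h'
  · linarith
  · linarith

lemma pair_lemma (A B C x y z u : ℝ) (hC : C ≠ 0)
    (h1 : B*(x*y) + C*(x+y) = 0) (h2 : B*(z*u) + C*(z+u) = 0) :
    (x-z)^2*((A*y^2+B*y+C)*(A*u^2+B*u+C)) = (y-u)^2*((A*x^2+B*x+C)*(A*z^2+B*z+C)) := by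
  have hDx : B*x + C ≠ 0 := by
    intro h
    have hx0 : x = 0 := by
      rcases mul_eq_zero.mp (show C * x = 0 by linear_combination h1 - y*h) with h'|h'
      · exact absurd h' hC
      · exact h'
    rw [hx0, mul_zero, zero_add] at h
    exact hC h
  have hDz : B*z + C ≠ 0 := by
    intro h
    have hz0 : z = 0 := by
      rcases mul_eq_zero.mp (show C * z = 0 by linear_combination h2 - u*h) with h'|h'
      · exact absurd h' hC
      · exact h'
    rw [hz0, mul_zero, zero_add] at h
    exact hC h
  have hy : y = -(C*x)/(B*x+C) := by
    rw [eq_div_iff hDx]; linear_combination h1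
  have hu : u = -(C*z)/(B*z+C) := by
    rw [eq_div_iff hDz]; linear_combination h2
  rw [hy, hu]
  have hDx' : x*B + C ≠ 0 := by rwa [mul_comm]
  have hDz' : z*B + C ≠ 0 := by rwa [mul_comm]
  field_simp
  ring

theorem rho_equalities_of_config (a b c d g p j k l : ℂ)
    (hcirc : ∃ ta tb tc td : ℝ,
      ta < tb ∧ tb < tc ∧ tc < td ∧ td < ta + 2 * Real.pi ∧
      a = Complex.exp (ta * Complex.I) ∧ b = Complex.exp (tb * Complex.I) ∧
      c = Complex.exp (tc * Complex.I) ∧ d = Complex.exp (td * Complex.I))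
    (hpar : ¬ ∃ s : ℝ, d - c = (s : ℂ) * (b - a))
    (hp : p ∈ openSegment ℝ b c)
    (hg : lineThrough a b ∩ lineThrough c d = {g})
    (hj : lineThrough g p ∩ lineThrough a c = {j})
    (hk : lineThrough g p ∩ lineThrough b d = {k})
    (hl : lineThrough g p ∩ lineThrough a d = {l})
    (hpD : ‖p‖ < 1) (hjD : ‖j‖ < 1)
    (hkD : ‖k‖ < 1) (hlD : ‖l‖ < 1) :
    rhoDist p j = rhoDist k l ∧ rhoDist p k = rhoDist j l := by
  obtain ⟨ta, tb, tc, td, o1, o2, o3, o4, ha_, hb_, hc_, hd_⟩ := hcirc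
  have hπ := Real.pi_pos
  have haabs : ‖a‖ = 1 := by rw [ha_]; exact Complex.norm_exp_ofReal_mul_I ta
  have hbabs : ‖b‖ = 1 := by rw [hb_]; exact Complex.norm_exp_ofReal_mul_I tb
  have hcabs : ‖c‖ = 1 := by rw [hc_]; exact Complex.norm_exp_ofReal_mul_I tc
  have hdabs : ‖d‖ = 1 := by rw [hd_]; exact Complex.norm_exp_ofReal_mul_I td
  have ha1 : a * conj a = 1 := by
    rw [Complex.mul_conj, Complex.normSq_eq_norm_sq, haabs]; norm_num
  have hb1 : b * conj b = 1 := by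
    rw [Complex.mul_conj, Complex.normSq_eq_norm_sq, hbabs]; norm_num
  have hc1 : c * conj c = 1 := by
    rw [Complex.mul_conj, Complex.normSq_eq_norm_sq, hcabs]; norm_num
  have hd1 : d * conj d = 1 := by
    rw [Complex.mul_conj, Complex.normSq_eq_norm_sq, hdabs]; norm_num
  have hac : a ≠ c := by rw [ha_, hc_]; exact exp_I_ne (by linarith) (by linarith)
  have had : a ≠ d := by rw [ha_, hd_]; exact exp_I_ne (by linarith) (by linarith)
  have hbc : b ≠ c := by rw [hb_, hc_]; exact exp_I_ne (by linarith) (by linarith)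
  have hbd : b ≠ d := by rw [hb_, hd_]; exact exp_I_ne (by linarith) (by linarith)
  have ha0 : a ≠ 0 := fun h => by rw [h] at ha1; simp at ha1
  have hb0 : b ≠ 0 := fun h => by rw [h] at hb1; simp at hb1
  have hc0 : c ≠ 0 := fun h => by rw [h] at hc1; simp at hc1
  have hd0 : d ≠ 0 := fun h => by rw [h] at hd1; simp at hd1
  have hgmem : g ∈ lineThrough a b ∩ lineThrough c d := by
    rw [hg]; exact Set.mem_singleton g
  have hEg1 : g + a*b*conj g = a + b := chord_mem ha1 hb1 hgmem.1
  have hEg2 : g + c*d*conj g = c + d := chord_mem hc1 hd1 hgmem.2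
  have hpbc : p ∈ lineThrough b c := by
    obtain ⟨α, β, hα, hβ, hαβ, hsum⟩ := hp
    simp only [Complex.real_smul] at hsum
    refine ⟨β, ?_⟩
    have h1 : (α:ℂ) + (β:ℂ) = 1 := by exact_mod_cast hαβ
    linear_combination -hsum + b*h1
  have hEpc : p + b*c*conj p = b + c := chord_mem hb1 hc1 hpbc
  by_cases hwz : p - g = 0
  · have hpg : p = g := by linear_combination hwz
    have hline : ∀ z : ℂ, z ∈ lineThrough g p → z = g := by
      rintro z ⟨t, hz⟩; rw [hz, hpg]; ring
    have hjmem : j ∈ lineThrough g p ∩ lineThrough a c := by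
      rw [hj]; exact Set.mem_singleton j
    have hkmem : k ∈ lineThrough g p ∩ lineThrough b d := by
      rw [hk]; exact Set.mem_singleton k
    have hlmem : l ∈ lineThrough g p ∩ lineThrough a d := by
      rw [hl]; exact Set.mem_singleton l
    have hjg := hline j hjmem.1
    have hkg := hline k hkmem.1
    have hlg := hline l hlmem.1
    rw [hjg, hkg, hlg, hpg]
    exact ⟨rfl, rfl⟩
  · set w := p - g with hwdef
    have hpw : p = g + w := by rw [hwdef]; ring
    have hcw : conj p = conj g + conj w := by rw [hwdef, map_sub]; ring
    have hEp : g + w + b*c*(conj g + conj w) = b + c := by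
      linear_combination hEpc - hpw - b*c*hcw
    have hjmem : j ∈ lineThrough g p ∩ lineThrough a c := by
      rw [hj]; exact Set.mem_singleton j
    have hkmem : k ∈ lineThrough g p ∩ lineThrough b d := by
      rw [hk]; exact Set.mem_singleton k
    have hlmem : l ∈ lineThrough g p ∩ lineThrough a d := by
      rw [hl]; exact Set.mem_singleton l
    obtain ⟨tj, hjval⟩ := hjmem.1
    obtain ⟨tk, hkval⟩ := hkmem.1
    obtain ⟨tl, hlval⟩ := hlmem.1
    have hjw : j = g + (tj:ℂ)*w := by rw [hwdef]; exact hjval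
    have hkw : k = g + (tk:ℂ)*w := by rw [hwdef]; exact hkval
    have hlw : l = g + (tl:ℂ)*w := by rw [hwdef]; exact hlval
    have hEj : j + a*c*conj j = a + c := chord_mem ha1 hc1 hjmem.2
    have hEk : k + b*d*conj k = b + d := chord_mem hb1 hd1 hkmem.2
    have hEl : l + a*d*conj l = a + d := chord_mem ha1 hd1 hlmem.2
    have hcj : conj j = conj g + (tj:ℂ) * conj w := by
      rw [hjw]; simp [map_add, map_mul, Complex.conj_ofReal]
    have hck : conj k = conj g + (tk:ℂ) * conj w := by
      rw [hkw]; simp [map_add, map_mul, Complex.conj_ofReal]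
    have hcl : conj l = conj g + (tl:ℂ) * conj w := by
      rw [hlw]; simp [map_add, map_mul, Complex.conj_ofReal]
    have hNj : a + c - g - a*c*conj g = (tj:ℂ) * (w + a*c*conj w) := by
      rw [hcj, hjw] at hEj
      linear_combination -hEj
    have hNk : b + d - g - b*d*conj g = (tk:ℂ) * (w + b*d*conj w) := by
      rw [hck, hkw] at hEk
      linear_combination -hEk
    have hNl : a + d - g - a*d*conj g = (tl:ℂ) * (w + a*d*conj w) := by
      rw [hcl, hlw] at hEl
      linear_combination -hEl
    have memg : g ∈ lineThrough g p := ⟨0, by push_cast; ring⟩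
    have memp : p ∈ lineThrough g p := ⟨1, by push_cast; ring⟩
    have hDne : ∀ (x y m : ℂ), x*conj x = 1 → y*conj y = 1 → x ≠ y →
        lineThrough g p ∩ lineThrough x y = {m} → ∀ t : ℝ,
        x + y - g - x*y*conj g = (t:ℂ)*(w + x*y*conj w) → w + x*y*conj w ≠ 0 := by
      intro x y m hx1 hy1 hxy hInt t hN hD
      rw [hD, mul_zero] at hN
      have hgxy : g + x*y*conj g = x + y := by linear_combination -hN
      have hpxy : p + x*y*conj p = x + y := by
        linear_combination hgxy + hD + hpw + x*y*hcw
      have hgmem2 : g ∈ lineThrough x y := mem_of_chord hxy hx1 hy1 hgxy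
      have hpmem2 : p ∈ lineThrough x y := mem_of_chord hxy hx1 hy1 hpxy
      have hsub : lineThrough g p ⊆ lineThrough x y := line_subset hgmem2 hpmem2
      have hgm : g ∈ ({m} : Set ℂ) := by rw [← hInt]; exact ⟨memg, hsub memg⟩
      have hpm : p ∈ ({m} : Set ℂ) := by rw [← hInt]; exact ⟨memp, hsub memp⟩
      rw [Set.mem_singleton_iff] at hgm hpm
      exact hwz (by rw [hwdef, hpm, hgm]; ring)
    have hDj : w + a*c*conj w ≠ 0 := hDne a c j ha1 hc1 hac hj tj hNj
    have hDk : w + b*d*conj w ≠ 0 := hDne b d k hb1 hd1 hbd hk tk hNk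
    have hDl : w + a*d*conj w ≠ 0 := hDne a d l ha1 hd1 had hl tl hNl
    have habcd : a*b - c*d ≠ 0 := by
      intro h
      have hsum : a + b - c - d = 0 := by linear_combination hEg2 - hEg1 + conj g * h
      have hroot : (c - a)*(c - b) = 0 := by linear_combination (-c)*hsum + h
      rcases mul_eq_zero.mp hroot with h'|h'
      · exact hac (sub_eq_zero.mp h').symm
      · exact hbc (sub_eq_zero.mp h').symm
    have key1 : (b*c*(a*b-c*d)^4) * ((g*conj w + conj g*w)*((a+c-g-a*c*conj g)*(b+d-g-b*d*conj g))
        + (g*conj g - 1)*((a+c-g-a*c*conj g)*(w+b*d*conj w) + (b+d-g-b*d*conj g)*(w+a*c*conj w))) = 0 := by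
      linear_combination (c^4*d^4*g^3 - 1*c^4*d^5*g^2 - 1*c^5*d^4*g^2 + c^5*d^5*g - 1*b*c^4*d^4*g^2 + b*c^4*d^5*g + b*c^5*d^4*g - 1*b*c^5*d^5 - 1*a*c^4*d^4*g^2 + a*c^4*d^5*g + a*c^5*d^4*g - 1*a*c^5*d^5 - 4*a*b*c^3*d^3*g^3 + 4*a*b*c^3*d^4*g^2 + 4*a*b*c^4*d^3*g^2 - 3*a*b*c^4*d^4*g - 1*a*b*c^4*d^5 - 1*a*b*c^5*d^4 + 2*a*b*c^5*d^5*(conj g) - 1*a*b*c^5*d^5*g*(conj g)^2 + 4*a*b^2*c^3*d^3*g^2 - 4*a*b^2*c^3*d^4*g - 4*a*b^2*c^4*d^3*g + 4*a*b^2*c^4*d^4 + 4*a^2*b*c^3*d^3*g^2 - 4*a^2*b*c^3*d^4*g - 4*a^2*b*c^4*d^3*g + 4*a^2*b*c^4*d^4 + 6*a^2*b^2*c^2*d^2*g^3 - 6*a^2*b^2*c^2*d^3*g^2 - 6*a^2*b^2*c^3*d^2*g^2 + 2*a^2*b^2*c^3*d^3*g + 4*a^2*b^2*c^3*d^4 +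 4*a^2*b^2*c^4*d^3 - 8*a^2*b^2*c^4*d^4*(conj g) + 4*a^2*b^2*c^4*d^4*g*(conj g)^2 - 6*a^2*b^3*c^2*d^2*g^2 + 6*a^2*b^3*c^2*d^3*g + 6*a^2*b^3*c^3*d^2*g - 6*a^2*b^3*c^3*d^3 - 6*a^3*b^2*c^2*d^2*g^2 + 6*a^3*b^2*c^2*d^3*g + 6*a^3*b^2*c^3*d^2*g - 6*a^3*b^2*c^3*d^3 - 4*a^3*b^3*c*d*g^3 + 4*a^3*b^3*c*d^2*g^2 + 4*a^3*b^3*c^2*d*g^2 + 2*a^3*b^3*c^2*d^2*g - 6*a^3*b^3*c^2*d^3 - 6*a^3*b^3*c^3*d^2 + 12*a^3*b^3*c^3*d^3*(conj g) - 6*a^3*b^3*c^3*d^3*g*(conj g)^2 + 4*a^3*b^4*c*d*g^2 - 4*a^3*b^4*c*d^2*g - 4*a^3*b^4*c^2*d*g + 4*a^3*b^4*c^2*d^2 + 4*a^4*b^3*c*d*g^2 - 4*a^4*b^3*c*d^2*g - 4*a^4*b^3*c^2*d*g + 4*a^4*b^3*c^2*d^2 + a^4*b^4*g^3 - 1*a^4*b^4*d*g^2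 - 1*a^4*b^4*c*g^2 - 3*a^4*b^4*c*d*g + 4*a^4*b^4*c*d^2 + 4*a^4*b^4*c^2*d - 8*a^4*b^4*c^2*d^2*(conj g) + 4*a^4*b^4*c^2*d^2*g*(conj g)^2 - 1*a^4*b^5*g^2 + a^4*b^5*d*g + a^4*b^5*c*g - 1*a^4*b^5*c*d - 1*a^5*b^4*g^2 + a^5*b^4*d*g + a^5*b^4*c*g - 1*a^5*b^4*c*d + a^5*b^5*g - 1*a^5*b^5*d - 1*a^5*b^5*c + 2*a^5*b^5*c*d*(conj g) - 1*a^5*b^5*c*d*g*(conj g)^2) * hEp + (-1*c^4*d^4*g^2*w - 1*c^4*d^4*g^3 + c^4*d^5*g*w + c^4*d^5*g^2 + c^5*d^4*g*w + 2*c^5*d^4*g^2 - 1*c^5*d^5*w - 2*c^5*d^5*g - 1*c^6*d^4*g + c^6*d^5 + b*c^4*d^4*g^2 - 1*b*c^4*d^5*g + 2*b*c^5*d^4*w - 1*b*c^5*d^4*g - 1*b*c^5*d^4*g*(conj g)*w - 1*b*c^5*d^4*g^2*(conj g) + b*c^5*d^5 + b*c^5*d^5*g*(conj g) + b*c^6*d^4*g*(conj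 g) - 1*b*c^6*d^5*(conj g) - 1*b^2*c^5*d^4*(conj g)*w + 4*a*b*c^3*d^3*g^2*w + 4*a*b*c^3*d^3*g^3 - 4*a*b*c^3*d^4*g*w - 4*a*b*c^3*d^4*g^2 - 4*a*b*c^4*d^3*g*w - 8*a*b*c^4*d^3*g^2 + 3*a*b*c^4*d^4*w + 7*a*b*c^4*d^4*g + a*b*c^4*d^4*g*(conj g)*w + a*b*c^4*d^4*g^2*(conj g) + a*b*c^4*d^5 - 1*a*b*c^4*d^5*(conj g)*w - 1*a*b*c^4*d^5*g*(conj g) + 4*a*b*c^5*d^3*g - 2*a*b*c^5*d^4 - 2*a*b*c^5*d^4*(conj g)*w - 2*a*b*c^5*d^4*g*(conj g) + a*b*c^5*d^5*(conj g)^2*w + a*b*c^5*d^5*g*(conj g)^2 + a*b*c^6*d^4*(conj g) - 1*a*b*c^6*d^5*(conj g)^2 - 4*a*b^2*c^3*d^3*g^2 + 4*a*b^2*c^3*d^4*g - 8*a*b^2*c^4*d^3*w + 4*a*b^2*c^4*d^3*g + 4*a*b^2*c^4*d^3*g*(conj g)*w + 4*a*b^2*c^4*d^3*g^2*(conj g)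 - 4*a*b^2*c^4*d^4 + a*b^2*c^4*d^4*(conj g)*w - 4*a*b^2*c^4*d^4*g*(conj g) - 4*a*b^2*c^5*d^3*g*(conj g) + 2*a*b^2*c^5*d^4*(conj g) + a*b^2*c^5*d^4*(conj g)^2*w + a*b^2*c^5*d^4*g*(conj g)^2 - 1*a*b^2*c^5*d^5*(conj g)^2 - 1*a*b^2*c^6*d^4*(conj g)^2 + a*b^2*c^6*d^5*(conj g)^3 + 4*a*b^3*c^4*d^3*(conj g)*w + a*b^3*c^5*d^4*(conj g)^2 - 1*a^2*b*c^4*d^4 + a^2*b*c^4*d^4*(conj g)*w + a^2*b*c^4*d^4*g*(conj g) - 1*a^2*b*c^4*d^5*(conj g) - 2*a^2*b*c^5*d^4*(conj g) + a^2*b*c^5*d^5*(conj g)^2 - 6*a^2*b^2*c^2*d^2*g^2*w - 6*a^2*b^2*c^2*d^2*g^3 + 6*a^2*b^2*c^2*d^3*g*w + 6*a^2*b^2*c^2*d^3*g^2 + 6*a^2*b^2*c^3*d^2*g*w + 12*a^2*b^2*c^3*d^2*g^2 - 2*a^2*b^2*c^3*d^3*w - 8*a^2*b^2*c^3*d^3*g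 - 4*a^2*b^2*c^3*d^3*g*(conj g)*w - 4*a^2*b^2*c^3*d^3*g^2*(conj g) - 4*a^2*b^2*c^3*d^4 + 4*a^2*b^2*c^3*d^4*(conj g)*w + 4*a^2*b^2*c^3*d^4*g*(conj g) - 6*a^2*b^2*c^4*d^2*g - 2*a^2*b^2*c^4*d^3 + 8*a^2*b^2*c^4*d^3*(conj g)*w + 8*a^2*b^2*c^4*d^3*g*(conj g) + 2*a^2*b^2*c^4*d^4*(conj g) - 5*a^2*b^2*c^4*d^4*(conj g)^2*w - 5*a^2*b^2*c^4*d^4*g*(conj g)^2 + a^2*b^2*c^4*d^5*(conj g)^2 - 4*a^2*b^2*c^5*d^3*(conj g) + 7*a^2*b^2*c^5*d^4*(conj g)^2 - 1*a^2*b^2*c^5*d^5*(conj g)^3 + 6*a^2*b^3*c^2*d^2*g^2 - 6*a^2*b^3*c^2*d^3*g + 12*a^2*b^3*c^3*d^2*w - 6*a^2*b^3*c^3*d^2*g - 6*a^2*b^3*c^3*d^2*g*(conj g)*w - 6*a^2*b^3*c^3*d^2*g^2*(conj g) + 6*a^2*b^3*c^3*d^3 - 4*a^2*b^3*c^3*d^3*(conj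 g)*w + 6*a^2*b^3*c^3*d^3*g*(conj g) + 6*a^2*b^3*c^4*d^2*g*(conj g) + 2*a^2*b^3*c^4*d^3*(conj g) - 4*a^2*b^3*c^4*d^3*(conj g)^2*w - 4*a^2*b^3*c^4*d^3*g*(conj g)^2 + 3*a^2*b^3*c^4*d^4*(conj g)^2 + 4*a^2*b^3*c^5*d^3*(conj g)^2 - 5*a^2*b^3*c^5*d^4*(conj g)^3 - 6*a^2*b^4*c^3*d^2*(conj g)*w - 4*a^2*b^4*c^4*d^3*(conj g)^2 + a^3*b*c^4*d^4*(conj g) + 4*a^3*b^2*c^3*d^3 - 4*a^3*b^2*c^3*d^3*(conj g)*w - 4*a^3*b^2*c^3*d^3*g*(conj g) + 4*a^3*b^2*c^3*d^4*(conj g) + 8*a^3*b^2*c^4*d^3*(conj g) - 6*a^3*b^2*c^4*d^4*(conj g)^2 + 4*a^3*b^3*c*d*g^2*w + 4*a^3*b^3*c*d*g^3 - 4*a^3*b^3*c*d^2*g*w - 4*a^3*b^3*c*d^2*g^2 - 4*a^3*b^3*c^2*d*g*w - 8*a^3*b^3*c^2*d*g^2 - 2*a^3*b^3*c^2*d^2*w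 + 2*a^3*b^3*c^2*d^2*g + 6*a^3*b^3*c^2*d^2*g*(conj g)*w + 6*a^3*b^3*c^2*d^2*g^2*(conj g) + 6*a^3*b^3*c^2*d^3 - 6*a^3*b^3*c^2*d^3*(conj g)*w - 6*a^3*b^3*c^2*d^3*g*(conj g) + 4*a^3*b^3*c^3*d*g + 8*a^3*b^3*c^3*d^2 - 12*a^3*b^3*c^3*d^2*(conj g)*w - 12*a^3*b^3*c^3*d^2*g*(conj g) - 8*a^3*b^3*c^3*d^3*(conj g) + 10*a^3*b^3*c^3*d^3*(conj g)^2*w + 10*a^3*b^3*c^3*d^3*g*(conj g)^2 - 4*a^3*b^3*c^3*d^4*(conj g)^2 + 6*a^3*b^3*c^4*d^2*(conj g) - 18*a^3*b^3*c^4*d^3*(conj g)^2 + 5*a^3*b^3*c^4*d^4*(conj g)^3 - 4*a^3*b^4*c*d*g^2 + 4*a^3*b^4*c*d^2*g - 8*a^3*b^4*c^2*d*w + 4*a^3*b^4*c^2*d*g + 4*a^3*b^4*c^2*d*g*(conj g)*w + 4*a^3*b^4*c^2*d*g^2*(conj g) - 4*a^3*b^4*c^2*d^2 + 6*a^3*b^4*c^2*d^2*(conj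 g)*w - 4*a^3*b^4*c^2*d^2*g*(conj g) - 4*a^3*b^4*c^3*d*g*(conj g) - 8*a^3*b^4*c^3*d^2*(conj g) + 6*a^3*b^4*c^3*d^2*(conj g)^2*w + 6*a^3*b^4*c^3*d^2*g*(conj g)^2 - 2*a^3*b^4*c^3*d^3*(conj g)^2 - 6*a^3*b^4*c^4*d^2*(conj g)^2 + 10*a^3*b^4*c^4*d^3*(conj g)^3 + 4*a^3*b^5*c^2*d*(conj g)*w + 6*a^3*b^5*c^3*d^2*(conj g)^2 - 4*a^4*b^2*c^3*d^3*(conj g) - 6*a^4*b^3*c^2*d^2 + 6*a^4*b^3*c^2*d^2*(conj g)*w + 6*a^4*b^3*c^2*d^2*g*(conj g) - 6*a^4*b^3*c^2*d^3*(conj g) - 12*a^4*b^3*c^3*d^2*(conj g) + 14*a^4*b^3*c^3*d^3*(conj g)^2 - 1*a^4*b^4*g^2*w - 1*a^4*b^4*g^3 + a^4*b^4*d*g*w + a^4*b^4*d*g^2 + a^4*b^4*c*g*w + 2*a^4*b^4*c*g^2 + 3*a^4*b^4*c*d*w + 2*a^4*b^4*c*d*g - 4*a^4*b^4*c*d*g*(conj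 g)*w - 4*a^4*b^4*c*d*g^2*(conj g) - 4*a^4*b^4*c*d^2 + 4*a^4*b^4*c*d^2*(conj g)*w + 4*a^4*b^4*c*d^2*g*(conj g) - 1*a^4*b^4*c^2*g - 7*a^4*b^4*c^2*d + 8*a^4*b^4*c^2*d*(conj g)*w + 8*a^4*b^4*c^2*d*g*(conj g) + 12*a^4*b^4*c^2*d^2*(conj g) - 10*a^4*b^4*c^2*d^2*(conj g)^2*w - 10*a^4*b^4*c^2*d^2*g*(conj g)^2 + 6*a^4*b^4*c^2*d^3*(conj g)^2 - 4*a^4*b^4*c^3*d*(conj g) + 22*a^4*b^4*c^3*d^2*(conj g)^2 - 10*a^4*b^4*c^3*d^3*(conj g)^3 + a^4*b^5*g^2 - 1*a^4*b^5*d*g + 2*a^4*b^5*c*w - 1*a^4*b^5*c*g - 1*a^4*b^5*c*g*(conj g)*w - 1*a^4*b^5*c*g^2*(conj g) + a^4*b^5*c*d - 4*a^4*b^5*c*d*(conj g)*w + a^4*b^5*c*d*g*(conj g) + a^4*b^5*c^2*g*(conj g) + 7*a^4*b^5*c^2*d*(conj g) - 4*a^4*b^5*c^2*d*(conj g)^2*w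 - 4*a^4*b^5*c^2*d*g*(conj g)^2 - 2*a^4*b^5*c^2*d^2*(conj g)^2 + 4*a^4*b^5*c^3*d*(conj g)^2 - 10*a^4*b^5*c^3*d^2*(conj g)^3 - 1*a^4*b^6*c*(conj g)*w - 4*a^4*b^6*c^2*d*(conj g)^2 + 6*a^5*b^3*c^2*d^2*(conj g) + 4*a^5*b^4*c*d - 4*a^5*b^4*c*d*(conj g)*w - 4*a^5*b^4*c*d*g*(conj g) + 4*a^5*b^4*c*d^2*(conj g) + 8*a^5*b^4*c^2*d*(conj g) - 16*a^5*b^4*c^2*d^2*(conj g)^2 - 1*a^5*b^5*w - 1*a^5*b^5*g + a^5*b^5*g*(conj g)*w + a^5*b^5*g^2*(conj g) + a^5*b^5*d - 1*a^5*b^5*d*(conj g)*w - 1*a^5*b^5*d*g*(conj g) + 2*a^5*b^5*c - 2*a^5*b^5*c*(conj g)*w - 2*a^5*b^5*c*g*(conj g) - 8*a^5*b^5*c*d*(conj g) + 5*a^5*b^5*c*d*(conj g)^2*w + 5*a^5*b^5*c*d*g*(conj g)^2 - 4*a^5*b^5*c*d^2*(conj g)^2 + a^5*b^5*c^2*(conj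 g) - 13*a^5*b^5*c^2*d*(conj g)^2 + 10*a^5*b^5*c^2*d^2*(conj g)^3 + a^5*b^6*(conj g)*w - 2*a^5*b^6*c*(conj g) + a^5*b^6*c*(conj g)^2*w + a^5*b^6*c*g*(conj g)^2 + 3*a^5*b^6*c*d*(conj g)^2 - 1*a^5*b^6*c^2*(conj g)^2 + 5*a^5*b^6*c^2*d*(conj g)^3 + a^5*b^7*c*(conj g)^2 - 4*a^6*b^4*c*d*(conj g) - 1*a^6*b^5 + a^6*b^5*(conj g)*w + a^6*b^5*g*(conj g) - 1*a^6*b^5*d*(conj g) - 2*a^6*b^5*c*(conj g) + 9*a^6*b^5*c*d*(conj g)^2 + 2*a^6*b^6*(conj g) - 1*a^6*b^6*(conj g)^2*w - 1*a^6*b^6*g*(conj g)^2 + a^6*b^6*d*(conj g)^2 + 3*a^6*b^6*c*(conj g)^2 - 5*a^6*b^6*c*d*(conj g)^3 - 1*a^6*b^7*(conj g)^2 - 1*a^6*b^7*c*(conj g)^3 + a^7*b^5*(conj g) - 2*a^7*b^6*(conj g)^2 + a^7*b^7*(conj g)^3) * hEg1 + (-1*b*c^5*d^4*w + b^2*c^5*d^4*(conj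 g)*w + a*b*c^4*d^4*w - 1*a*b*c^5*d^4 + a*b*c^5*d^4*(conj g)*w + 4*a*b^2*c^4*d^3*w - 1*a*b^2*c^4*d^4*(conj g)*w + 2*a*b^2*c^5*d^4*(conj g) - 1*a*b^2*c^5*d^4*(conj g)^2*w - 4*a*b^3*c^4*d^3*(conj g)*w - 1*a*b^3*c^5*d^4*(conj g)^2 + a^2*b*c^4*d^4 - 1*a^2*b*c^4*d^4*(conj g)*w + a^2*b*c^5*d^4*(conj g) - 4*a^2*b^2*c^3*d^3*w + 4*a^2*b^2*c^4*d^3 - 4*a^2*b^2*c^4*d^3*(conj g)*w - 2*a^2*b^2*c^4*d^4*(conj g) + a^2*b^2*c^4*d^4*(conj g)^2*w - 2*a^2*b^2*c^5*d^4*(conj g)^2 - 6*a^2*b^3*c^3*d^2*w + 4*a^2*b^3*c^3*d^3*(conj g)*w - 8*a^2*b^3*c^4*d^3*(conj g) + 4*a^2*b^3*c^4*d^3*(conj g)^2*w + a^2*b^3*c^4*d^4*(conj g)^2 + a^2*b^3*c^5*d^4*(conj g)^3 + 6*a^2*b^4*c^3*d^2*(conj g)*w + 4*a^2*b^4*c^4*d^3*(conj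 g)^2 - 1*a^3*b*c^4*d^4*(conj g) - 4*a^3*b^2*c^3*d^3 + 4*a^3*b^2*c^3*d^3*(conj g)*w - 4*a^3*b^2*c^4*d^3*(conj g) + 2*a^3*b^2*c^4*d^4*(conj g)^2 + 6*a^3*b^3*c^2*d^2*w - 6*a^3*b^3*c^3*d^2 + 6*a^3*b^3*c^3*d^2*(conj g)*w + 8*a^3*b^3*c^3*d^3*(conj g) - 4*a^3*b^3*c^3*d^3*(conj g)^2*w + 8*a^3*b^3*c^4*d^3*(conj g)^2 - 1*a^3*b^3*c^4*d^4*(conj g)^3 + 4*a^3*b^4*c^2*d*w - 6*a^3*b^4*c^2*d^2*(conj g)*w + 12*a^3*b^4*c^3*d^2*(conj g) - 6*a^3*b^4*c^3*d^2*(conj g)^2*w - 4*a^3*b^4*c^3*d^3*(conj g)^2 - 4*a^3*b^4*c^4*d^3*(conj g)^3 - 4*a^3*b^5*c^2*d*(conj g)*w - 6*a^3*b^5*c^3*d^2*(conj g)^2 + 4*a^4*b^2*c^3*d^3*(conj g) + 6*a^4*b^3*c^2*d^2 - 6*a^4*b^3*c^2*d^2*(conj g)*w + 6*a^4*b^3*c^3*d^2*(conj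 g) - 8*a^4*b^3*c^3*d^3*(conj g)^2 - 4*a^4*b^4*c*d*w + 4*a^4*b^4*c^2*d - 4*a^4*b^4*c^2*d*(conj g)*w - 12*a^4*b^4*c^2*d^2*(conj g) + 6*a^4*b^4*c^2*d^2*(conj g)^2*w - 12*a^4*b^4*c^3*d^2*(conj g)^2 + 4*a^4*b^4*c^3*d^3*(conj g)^3 - 1*a^4*b^5*c*w + 4*a^4*b^5*c*d*(conj g)*w - 8*a^4*b^5*c^2*d*(conj g) + 4*a^4*b^5*c^2*d*(conj g)^2*w + 6*a^4*b^5*c^2*d^2*(conj g)^2 + 6*a^4*b^5*c^3*d^2*(conj g)^3 + a^4*b^6*c*(conj g)*w + 4*a^4*b^6*c^2*d*(conj g)^2 - 6*a^5*b^3*c^2*d^2*(conj g) - 4*a^5*b^4*c*d + 4*a^5*b^4*c*d*(conj g)*w - 4*a^5*b^4*c^2*d*(conj g) + 12*a^5*b^4*c^2*d^2*(conj g)^2 + a^5*b^5*w - 1*a^5*b^5*c + a^5*b^5*c*(conj g)*w + 8*a^5*b^5*c*d*(conj g) - 4*a^5*b^5*c*d*(conj g)^2*w + 8*a^5*b^5*c^2*d*(conj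 g)^2 - 6*a^5*b^5*c^2*d^2*(conj g)^3 - 1*a^5*b^6*(conj g)*w + 2*a^5*b^6*c*(conj g) - 1*a^5*b^6*c*(conj g)^2*w - 4*a^5*b^6*c*d*(conj g)^2 - 4*a^5*b^6*c^2*d*(conj g)^3 - 1*a^5*b^7*c*(conj g)^2 + 4*a^6*b^4*c*d*(conj g) + a^6*b^5 - 1*a^6*b^5*(conj g)*w + a^6*b^5*c*(conj g) - 8*a^6*b^5*c*d*(conj g)^2 - 2*a^6*b^6*(conj g) + a^6*b^6*(conj g)^2*w - 2*a^6*b^6*c*(conj g)^2 + 4*a^6*b^6*c*d*(conj g)^3 + a^6*b^7*(conj g)^2 + a^6*b^7*c*(conj g)^3 - 1*a^7*b^5*(conj g) + 2*a^7*b^6*(conj g)^2 - 1*a^7*b^7*(conj g)^3) * hEg1 - (-1*b*c^5*d^4*w + b^2*c^5*d^4*(conj g)*w + a*b*c^4*d^4*w - 1*a*b*c^5*d^4 + a*b*c^5*d^4*(conj g)*w + 4*a*b^2*c^4*d^3*w - 1*a*b^2*c^4*d^4*(conj g)*w + 2*a*b^2*c^5*d^4*(conj g) - 1*a*b^2*c^5*d^4*(conj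 g)^2*w - 4*a*b^3*c^4*d^3*(conj g)*w - 1*a*b^3*c^5*d^4*(conj g)^2 + a^2*b*c^4*d^4 - 1*a^2*b*c^4*d^4*(conj g)*w + a^2*b*c^5*d^4*(conj g) - 4*a^2*b^2*c^3*d^3*w + 4*a^2*b^2*c^4*d^3 - 4*a^2*b^2*c^4*d^3*(conj g)*w - 2*a^2*b^2*c^4*d^4*(conj g) + a^2*b^2*c^4*d^4*(conj g)^2*w - 2*a^2*b^2*c^5*d^4*(conj g)^2 - 6*a^2*b^3*c^3*d^2*w + 4*a^2*b^3*c^3*d^3*(conj g)*w - 8*a^2*b^3*c^4*d^3*(conj g) + 4*a^2*b^3*c^4*d^3*(conj g)^2*w + a^2*b^3*c^4*d^4*(conj g)^2 + a^2*b^3*c^5*d^4*(conj g)^3 + 6*a^2*b^4*c^3*d^2*(conj g)*w + 4*a^2*b^4*c^4*d^3*(conj g)^2 - 1*a^3*b*c^4*d^4*(conj g) - 4*a^3*b^2*c^3*d^3 + 4*a^3*b^2*c^3*d^3*(conj g)*w - 4*a^3*b^2*c^4*d^3*(conj g) + 2*a^3*b^2*c^4*d^4*(conj g)^2 + 6*a^3*b^3*c^2*d^2*w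 - 6*a^3*b^3*c^3*d^2 + 6*a^3*b^3*c^3*d^2*(conj g)*w + 8*a^3*b^3*c^3*d^3*(conj g) - 4*a^3*b^3*c^3*d^3*(conj g)^2*w + 8*a^3*b^3*c^4*d^3*(conj g)^2 - 1*a^3*b^3*c^4*d^4*(conj g)^3 + 4*a^3*b^4*c^2*d*w - 6*a^3*b^4*c^2*d^2*(conj g)*w + 12*a^3*b^4*c^3*d^2*(conj g) - 6*a^3*b^4*c^3*d^2*(conj g)^2*w - 4*a^3*b^4*c^3*d^3*(conj g)^2 - 4*a^3*b^4*c^4*d^3*(conj g)^3 - 4*a^3*b^5*c^2*d*(conj g)*w - 6*a^3*b^5*c^3*d^2*(conj g)^2 + 4*a^4*b^2*c^3*d^3*(conj g) + 6*a^4*b^3*c^2*d^2 - 6*a^4*b^3*c^2*d^2*(conj g)*w + 6*a^4*b^3*c^3*d^2*(conj g) - 8*a^4*b^3*c^3*d^3*(conj g)^2 - 4*a^4*b^4*c*d*w + 4*a^4*b^4*c^2*d - 4*a^4*b^4*c^2*d*(conj g)*w - 12*a^4*b^4*c^2*d^2*(conj g) + 6*a^4*b^4*c^2*d^2*(conj g)^2*w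 - 12*a^4*b^4*c^3*d^2*(conj g)^2 + 4*a^4*b^4*c^3*d^3*(conj g)^3 - 1*a^4*b^5*c*w + 4*a^4*b^5*c*d*(conj g)*w - 8*a^4*b^5*c^2*d*(conj g) + 4*a^4*b^5*c^2*d*(conj g)^2*w + 6*a^4*b^5*c^2*d^2*(conj g)^2 + 6*a^4*b^5*c^3*d^2*(conj g)^3 + a^4*b^6*c*(conj g)*w + 4*a^4*b^6*c^2*d*(conj g)^2 - 6*a^5*b^3*c^2*d^2*(conj g) - 4*a^5*b^4*c*d + 4*a^5*b^4*c*d*(conj g)*w - 4*a^5*b^4*c^2*d*(conj g) + 12*a^5*b^4*c^2*d^2*(conj g)^2 + a^5*b^5*w - 1*a^5*b^5*c + a^5*b^5*c*(conj g)*w + 8*a^5*b^5*c*d*(conj g) - 4*a^5*b^5*c*d*(conj g)^2*w + 8*a^5*b^5*c^2*d*(conj g)^2 - 6*a^5*b^5*c^2*d^2*(conj g)^3 - 1*a^5*b^6*(conj g)*w + 2*a^5*b^6*c*(conj g) - 1*a^5*b^6*c*(conj g)^2*w - 4*a^5*b^6*c*d*(conj g)^2 - 4*a^5*b^6*c^2*d*(conj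 g)^3 - 1*a^5*b^7*c*(conj g)^2 + 4*a^6*b^4*c*d*(conj g) + a^6*b^5 - 1*a^6*b^5*(conj g)*w + a^6*b^5*c*(conj g) - 8*a^6*b^5*c*d*(conj g)^2 - 2*a^6*b^6*(conj g) + a^6*b^6*(conj g)^2*w - 2*a^6*b^6*c*(conj g)^2 + 4*a^6*b^6*c*d*(conj g)^3 + a^6*b^7*(conj g)^2 + a^6*b^7*c*(conj g)^3 - 1*a^7*b^5*(conj g) + 2*a^7*b^6*(conj g)^2 - 1*a^7*b^7*(conj g)^3) * hEg2
    have key2 : (b*c*(a*b-c*d)^3) * ((g*conj w + conj g*w)*(a+d-g-a*d*conj g)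
        + (g*conj g - 1)*((a+d-g-a*d*conj g) + (w+a*d*conj w))) = 0 := by
      linear_combination (c^3*d^3*g^2 - 1*c^3*d^4*g - 1*a*c^3*d^3*g + a*c^3*d^4 - 3*a*b*c^2*d^2*g^2 + 3*a*b*c^2*d^3*g + 3*a^2*b*c^2*d^2*g - 3*a^2*b*c^2*d^3 + 3*a^2*b^2*c*d*g^2 - 3*a^2*b^2*c*d^2*g - 3*a^3*b^2*c*d*g + 3*a^3*b^2*c*d^2 - 1*a^3*b^3*g^2 + a^3*b^3*d*g + a^4*b^3*g - 1*a^4*b^3*d) * hEp + (-1*c^3*d^3*g*w - 1*c^3*d^3*g^2 + c^3*d^4*w + c^3*d^4*g + c^4*d^3*g - 1*c^4*d^4 - 1*b*c^3*d^3*w + 3*a*b*c^2*d^2*g*w + 3*a*b*c^2*d^2*g^2 - 3*a*b*c^2*d^3*w - 3*a*b*c^2*d^3*g - 3*a*b*c^3*d^2*g + 2*a*b*c^3*d^3 + a*b*c^3*d^3*(conj g)*w + a*b*c^3*d^3*g*(conj g) - 1*a*b*c^3*d^4*(conj g) - 1*a*b*c^4*d^3*(conj g) + a*b*c^4*d^4*(conj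 g)^2 + 3*a*b^2*c^2*d^2*w + a*b^2*c^3*d^3*(conj g) + a^2*b*c^3*d^3*(conj g) - 3*a^2*b^2*c*d*g*w - 3*a^2*b^2*c*d*g^2 + 3*a^2*b^2*c*d^2*w + 3*a^2*b^2*c*d^2*g + 3*a^2*b^2*c^2*d*g - 3*a^2*b^2*c^2*d^2*(conj g)*w - 3*a^2*b^2*c^2*d^2*g*(conj g) + 3*a^2*b^2*c^2*d^3*(conj g) + 3*a^2*b^2*c^3*d^2*(conj g) - 4*a^2*b^2*c^3*d^3*(conj g)^2 - 3*a^2*b^3*c*d*w - 3*a^2*b^3*c^2*d^2*(conj g) - 3*a^3*b^2*c^2*d^2*(conj g) + a^3*b^3*g*w + a^3*b^3*g^2 - 1*a^3*b^3*d*w - 1*a^3*b^3*d*g - 1*a^3*b^3*c*g - 2*a^3*b^3*c*d + 3*a^3*b^3*c*d*(conj g)*w + 3*a^3*b^3*c*d*g*(conj g) - 3*a^3*b^3*c*d^2*(conj g) - 3*a^3*b^3*c^2*d*(conj g) + 6*a^3*b^3*c^2*d^2*(conj g)^2 + a^3*b^4*w + 3*a^3*b^4*c*d*(conj g) + 3*a^4*b^3*c*d*(conj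 g) + a^4*b^4 - 1*a^4*b^4*(conj g)*w - 1*a^4*b^4*g*(conj g) + a^4*b^4*d*(conj g) + a^4*b^4*c*(conj g) - 4*a^4*b^4*c*d*(conj g)^2 - 1*a^4*b^5*(conj g) - 1*a^5*b^4*(conj g) + a^5*b^5*(conj g)^2) * hEg1 + (b*c^3*d^3*w + a*b*c^3*d^3 - 1*a*b*c^3*d^3*(conj g)*w - 3*a*b^2*c^2*d^2*w - 1*a*b^2*c^3*d^3*(conj g) - 1*a^2*b*c^3*d^3*(conj g) - 3*a^2*b^2*c^2*d^2 + 3*a^2*b^2*c^2*d^2*(conj g)*w + a^2*b^2*c^3*d^3*(conj g)^2 + 3*a^2*b^3*c*d*w + 3*a^2*b^3*c^2*d^2*(conj g) + 3*a^3*b^2*c^2*d^2*(conj g) + 3*a^3*b^3*c*d - 3*a^3*b^3*c*d*(conj g)*w - 3*a^3*b^3*c^2*d^2*(conj g)^2 - 1*a^3*b^4*w - 3*a^3*b^4*c*d*(conj g) - 3*a^4*b^3*c*d*(conj g) - 1*a^4*b^4 + a^4*b^4*(conj g)*w + 3*a^4*b^4*c*d*(conj g)^2 + a^4*b^5*(conj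 g) + a^5*b^4*(conj g) - 1*a^5*b^5*(conj g)^2) * hEg1 - (b*c^3*d^3*w + a*b*c^3*d^3 - 1*a*b*c^3*d^3*(conj g)*w - 3*a*b^2*c^2*d^2*w - 1*a*b^2*c^3*d^3*(conj g) - 1*a^2*b*c^3*d^3*(conj g) - 3*a^2*b^2*c^2*d^2 + 3*a^2*b^2*c^2*d^2*(conj g)*w + a^2*b^2*c^3*d^3*(conj g)^2 + 3*a^2*b^3*c*d*w + 3*a^2*b^3*c^2*d^2*(conj g) + 3*a^3*b^2*c^2*d^2*(conj g) + 3*a^3*b^3*c*d - 3*a^3*b^3*c*d*(conj g)*w - 3*a^3*b^3*c^2*d^2*(conj g)^2 - 1*a^3*b^4*w - 3*a^3*b^4*c*d*(conj g) - 3*a^4*b^3*c*d*(conj g) - 1*a^4*b^4 + a^4*b^4*(conj g)*w + 3*a^4*b^4*c*d*(conj g)^2 + a^4*b^5*(conj g) + a^5*b^4*(conj g) - 1*a^5*b^5*(conj g)^2) * hEg2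
    have hM1 : (b*c*(a*b-c*d)^4) ≠ 0 :=
      mul_ne_zero (mul_ne_zero hb0 hc0) (pow_ne_zero _ habcd)
    have hM2 : (b*c*(a*b-c*d)^3) ≠ 0 :=
      mul_ne_zero (mul_ne_zero hb0 hc0) (pow_ne_zero _ habcd)
    have hT1 : (g*conj w + conj g*w)*((a+c-g-a*c*conj g)*(b+d-g-b*d*conj g))
        + (g*conj g - 1)*((a+c-g-a*c*conj g)*(w+b*d*conj w) + (b+d-g-b*d*conj g)*(w+a*c*conj w)) = 0 :=
      (mul_eq_zero.mp key1).resolve_left hM1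
    have hT2 : (g*conj w + conj g*w)*(a+d-g-a*d*conj g)
        + (g*conj g - 1)*((a+d-g-a*d*conj g) + (w+a*d*conj w)) = 0 :=
      (mul_eq_zero.mp key2).resolve_left hM2
    have hR1c : ((g*conj w + conj g*w)*((tj:ℂ)*(tk:ℂ)) + (g*conj g - 1)*((tj:ℂ)+(tk:ℂ)))
        * ((w + a*c*conj w)*(w + b*d*conj w)) = 0 := by
      linear_combination hT1
        + (-((g*conj w + conj g*w)*(b+d-g-b*d*conj g)) - (g*conj g - 1)*(w+b*d*conj w)
            + (g*conj w + conj g*w)*((b+d-g-b*d*conj g) - (tk:ℂ)*(w+b*d*conj w))) * hNj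
        + (-((g*conj w + conj g*w)*(a+c-g-a*c*conj g)) - (g*conj g - 1)*(w+a*c*conj w)) * hNk
    have hR2c : ((g*conj w + conj g*w)*(tl:ℂ) + (g*conj g - 1)*((tl:ℂ)+1))
        * (w + a*d*conj w) = 0 := by
      linear_combination hT2
        + (-(g*conj w + conj g*w) - (g*conj g - 1)) * hNl
    have hR1c' : (g*conj w + conj g*w)*((tj:ℂ)*(tk:ℂ)) + (g*conj g - 1)*((tj:ℂ)+(tk:ℂ)) = 0 :=
      (mul_eq_zero.mp hR1c).resolve_right (mul_ne_zero hDj hDk)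
    have hR2c' : (g*conj w + conj g*w)*(tl:ℂ) + (g*conj g - 1)*((tl:ℂ)+1) = 0 :=
      (mul_eq_zero.mp hR2c).resolve_right hDl
    set Ar : ℝ := Complex.normSq w with hAr
    set Br : ℝ := 2*(g*conj w).re with hBr
    set Cr : ℝ := Complex.normSq g - 1 with hCr
    have hBrc : (Br:ℂ) = g*conj w + conj g * w := by
      rw [hBr]
      rw [show ((2*(g*conj w).re : ℝ) : ℂ) = (g*conj w) + conj (g*conj w) from (Complex.add_conj _).symm]
      rw [map_mul, Complex.conj_conj]
    have hCrc : (Cr:ℂ) = g*conj g - 1 := by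
      rw [hCr]; push_cast; rw [← Complex.mul_conj]
    have hR1 : Br*(tj*tk) + Cr*(tj+tk) = 0 := by
      have hcx : ((Br*(tj*tk) + Cr*(tj+tk) : ℝ) : ℂ) = 0 := by
        push_cast
        rw [hBrc, hCrc]
        linear_combination hR1c'
      exact_mod_cast hcx
    have hR2 : Br*tl + Cr*(tl+1) = 0 := by
      have hcx : ((Br*tl + Cr*(tl+1) : ℝ) : ℂ) = 0 := by
        push_cast
        rw [hBrc, hCrc]
        linear_combination hR2c'
      exact_mod_cast hcx
    have hCrne : Cr ≠ 0 := by
      intro h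
      have hgg : g * conj g = 1 := by
        have h2 := hCrc
        rw [h] at h2
        push_cast at h2
        linear_combination -h2
      have h1 : (g - a)*(g - b) = 0 := by linear_combination g*hEg1 - a*b*hgg
      have h2 : (g - c)*(g - d) = 0 := by linear_combination g*hEg2 - c*d*hgg
      rcases mul_eq_zero.mp h1 with h'|h' <;> rcases mul_eq_zero.mp h2 with h''|h''
      · exact hac (by rw [← sub_eq_zero]; linear_combination h'' - h')
      · exact had (by rw [← sub_eq_zero]; linear_combination h'' - h')
      · exact hbc (by rw [← sub_eq_zero]; linear_combination h'' - h')
      · exact hbd (by rw [← sub_eq_zero]; linear_combination h'' - h')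
    have hQ : ∀ (t : ℝ) (x : ℂ), x = g + (t:ℂ)*w → 1 - ‖x‖^2 = -(Ar*t^2 + Br*t + Cr) := by
      intro t x hx
      rw [hx, Complex.sq_norm, hAr, hBr, hCr]
      simp only [Complex.normSq_apply, Complex.add_re, Complex.add_im, Complex.mul_re,
        Complex.mul_im, Complex.ofReal_re, Complex.ofReal_im, Complex.conj_re, Complex.conj_im]
      ring
    have hD2 : ∀ (s t : ℝ) (x y : ℂ), x = g + (s:ℂ)*w → y = g + (t:ℂ)*w →
        ‖x - y‖^2 = (s-t)^2 * Ar := by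
      intro s t x y hx hy
      rw [hx, hy, hAr, Complex.sq_norm]
      rw [show g + (s:ℂ)*w - (g + (t:ℂ)*w) = ((s - t : ℝ):ℂ) * w by push_cast; ring]
      rw [Complex.normSq_mul, Complex.normSq_ofReal]
      ring
    have hpw1 : p = g + ((1:ℝ):ℂ)*w := by push_cast; linear_combination hpw
    have hQp := hQ 1 p hpw1
    have hQj := hQ tj j hjw
    have hQk := hQ tk k hkw
    have hQl := hQ tl l hlw
    have hpos : ∀ x : ℂ, ‖x‖ < 1 → 0 < 1 - ‖x‖^2 := by
      intro x hx
      nlinarith [norm_nonneg x]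
    have hPp := hpos p hpD
    have hPj := hpos j hjD
    have hPk := hpos k hkD
    have hPl := hpos l hlD
    have hG1 := pair_lemma Ar Br Cr tj tk 1 tl hCrne hR1 (by linear_combination hR2)
    have hG2 := pair_lemma Ar Br Cr tk tj 1 tl hCrne (by linear_combination hR1) (by linear_combination hR2)
    constructor
    · have e1 := hD2 1 tj p j hpw1 hjw
      have e2 := hD2 tk tl k l hkw hlw
      have hn1 : 0 < (1 - ‖p‖^2) * (1 - ‖j‖^2) := mul_pos hPp hPj
      have hn2 : 0 < (1 - ‖k‖^2) * (1 - ‖l‖^2) := mul_pos hPk hPl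
      unfold rhoDist
      congr 1
      congr 1
      apply eq_of_sq_eq (div_nonneg (norm_nonneg _) (Real.sqrt_nonneg _))
        (div_nonneg (norm_nonneg _) (Real.sqrt_nonneg _))
      rw [div_pow, div_pow, Real.sq_sqrt hn1.le, Real.sq_sqrt hn2.le, e1, e2,
        div_eq_div_iff hn1.ne' hn2.ne', hQp, hQj, hQk, hQl]
      linear_combination Ar * hG1
    · have e1 := hD2 1 tk p k hpw1 hkw
      have e2 := hD2 tj tl j l hjw hlw
      have hn1 : 0 < (1 - ‖p‖^2) * (1 - ‖k‖^2) := mul_pos hPp hPk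
      have hn2 : 0 < (1 - ‖j‖^2) * (1 - ‖l‖^2) := mul_pos hPj hPl
      unfold rhoDist
      congr 1
      congr 1
      apply eq_of_sq_eq (div_nonneg (norm_nonneg _) (Real.sqrt_nonneg _))
        (div_nonneg (norm_nonneg _) (Real.sqrt_nonneg _))
      rw [div_pow, div_pow, Real.sq_sqrt hn1.le, Real.sq_sqrt hn2.le, e1, e2,
        div_eq_div_iff hn1.ne' hn2.ne', hQp, hQk, hQj, hQl]
      linear_combination Ar * hG2
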